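/- For any real numbers a, b, OPT, ε ≥ 0 and integer k ≥ 1, if f(x') ≥ (1 − 1/k)·f(x) + OPT/k − ε and f(x) ≥ (1 − (1 − 1/k)^i)·(OPT − kε), then f(x') ≥ (1 − (1 − 1/k)^{i+1})·(OPT − kε). -/

import Mathlib

lemma aux_inductive_step (fx fx' t c : ℝ) (i : ℕ) (hc : 0 ≤ c)
    (h1 : fx' ≥ c * fx + (1 - c) * t) (h2 : fx ≥ (1 - c ^ i) * t) :
    fx' ≥ (1 - c ^ (i + 1)) * t := by
  have hmul : c * ((1 - c ^ i) * t) ≤ c * fx := mul_le_mul_of_nonneg_left h2 hc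
  have hid : c * ((1 - c ^ i) * t) + (1 - c) * t = (1 - c ^ (i + 1)) * t := by ring
  linarith

/-- Inductive step inequality in the GSEMO analysis for ε-approximately
submodular maximization (Krause et al. notion). -/
theorem inductive_step_eps_approx (fx fx' OPT ε : ℝ) (k i : ℕ) (hk : 1 ≤ k)
    (hfx : 0 ≤ fx) (hfx' : 0 ≤ fx') (hOPT : 0 ≤ OPT) (hε : 0 ≤ ε)
    (h1 : fx' ≥ (1 - 1 / (k : ℝ)) * fx + OPT / k - ε)
    (h2 : fx ≥ (1 - (1 - 1 / (k : ℝ)) ^ i) * (OPT - k * ε)) :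
    fx' ≥ (1 - (1 - 1 / (k : ℝ)) ^ (i + 1)) * (OPT - k * ε) := by
  have hk1 : (1 : ℝ) ≤ (k : ℝ) := by exact_mod_cast hk
  have hkpos : (0 : ℝ) < (k : ℝ) := by linarith
  have hc0 : 0 ≤ 1 - 1 / (k : ℝ) := by
    have : 1 / (k : ℝ) ≤ 1 := by rw [div_le_one hkpos]; exact hk1
    linarith
  apply aux_inductive_step fx fx' (OPT - k * ε) _ i hc0 _ h2
  have : (1 - (1 - 1 / (k : ℝ))) * (OPT - k * ε) = OPT / k - ε := by
    field_simp
    ring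
  rw [this]; linarith
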